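/- Let λ > 0 and suppose A, B is a local minimum of 𝓛_{L2}(A,B) = L(ABᵀ) + (λ/2)(‖A‖_F² + ‖B‖_F²) with L differentiable, where A ∈ ℝ^{m×r}, B ∈ ℝ^{n×r}, m, n ≥ r. Then AᵀA = BᵀB and W = ABᵀ is a local minimum of 𝓛_*(W) = L(W) + λ‖W‖_* restricted to the set of matrices of rank at most r. -/

import Mathlib

open Matrix

/-- Squared Frobenius norm of a real matrix. -/
noncomputable def frobSq {m n : ℕ} (A : Matrix (Fin m) (Fin n) ℝ) : ℝ :=
  ∑ i, ∑ j, (A i j) ^ 2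

/-- Frobenius norm. -/
noncomputable def frobNorm {m n : ℕ} (A : Matrix (Fin m) (Fin n) ℝ) : ℝ :=
  Real.sqrt (frobSq A)

lemma wwT_posSemidef {m n : ℕ} (W : Matrix (Fin m) (Fin n) ℝ) :
    (W * Wᵀ).PosSemidef := by
  simpa [Matrix.conjTranspose_eq_transpose_of_trivial] using
    W.posSemidef_self_mul_conjTranspose

/-- The positive semidefinite square root (the definition of the removed `Matrix.PosSemidef.sqrt`). -/
noncomputable def posSemidefSqrt {m : ℕ} {A : Matrix (Fin m) (Fin m) ℝ} (hA : A.PosSemidef) :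
    Matrix (Fin m) (Fin m) ℝ :=
  hA.1.eigenvectorUnitary.1 * diagonal ((↑) ∘ (√·) ∘ hA.1.eigenvalues) *
    (star hA.1.eigenvectorUnitary : Matrix (Fin m) (Fin m) ℝ)

/-- Nuclear norm: trace of the PSD square root of `W * Wᵀ`. -/
noncomputable def nuclearNorm {m n : ℕ} (W : Matrix (Fin m) (Fin n) ℝ) : ℝ :=
  (posSemidefSqrt (wwT_posSemidef W)).trace

attribute [local instance] Matrix.normedAddCommGroup Matrix.normedSpace

open scoped MatrixOrder in
lemma posSemidefSqrt_eq_cfc {m : ℕ} {A : Matrix (Fin m) (Fin m) ℝ} (hA : A.PosSemidef) :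
    posSemidefSqrt hA = CFC.sqrt A := by
  rw [CFC.sqrt_eq_real_sqrt A hA.nonneg, cfcₙ_eq_cfc, hA.1.cfc_eq, IsHermitian.cfc,
    Unitary.conjStarAlgAut_apply]
  rfl

open scoped MatrixOrder in
lemma posSemidefSqrt_posSemidef {m : ℕ} {A : Matrix (Fin m) (Fin m) ℝ} (hA : A.PosSemidef) :
    (posSemidefSqrt hA).PosSemidef := by
  rw [posSemidefSqrt_eq_cfc]
  exact (CFC.sqrt_nonneg A).posSemidef

open scoped MatrixOrder in
lemma psd_eq_sqrt_of_sq_eq {m : ℕ} {A B : Matrix (Fin m) (Fin m) ℝ} (hB : B.PosSemidef)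
    (hA : A.PosSemidef) (h : B ^ 2 = A) : B = posSemidefSqrt hA := by
  rw [posSemidefSqrt_eq_cfc]
  exact (CFC.sqrt_unique (by rw [← sq]; exact h) hB.nonneg).symm

/-- Frobenius inner product. -/
noncomputable def dotF {m n : ℕ} (A B : Matrix (Fin m) (Fin n) ℝ) : ℝ :=
  ∑ i, ∑ j, A i j * B i j

lemma frobSq_eq_trace {m n : ℕ} (A : Matrix (Fin m) (Fin n) ℝ) :
    frobSq A = (Aᵀ * A).trace := by
  simp [frobSq, Matrix.trace, Matrix.diag, Matrix.mul_apply, sq]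
  rw [Finset.sum_comm]

lemma dotF_eq_trace {m n : ℕ} (A B : Matrix (Fin m) (Fin n) ℝ) :
    dotF A B = (Aᵀ * B).trace := by
  simp [dotF, Matrix.trace, Matrix.diag, Matrix.mul_apply]
  rw [Finset.sum_comm]

lemma frobSq_nonneg {m n : ℕ} (A : Matrix (Fin m) (Fin n) ℝ) : 0 ≤ frobSq A := by
  apply Finset.sum_nonneg; intro i _; apply Finset.sum_nonneg; intro j _; positivity

lemma frobSq_eq_zero {m n : ℕ} {A : Matrix (Fin m) (Fin n) ℝ} (h : frobSq A = 0) : A = 0 := by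
  ext i j
  have h1 : ∀ i ∈ Finset.univ, (0:ℝ) ≤ ∑ j, (A i j)^2 := by
    intro i _; apply Finset.sum_nonneg; intro j _; positivity
  have h2 := (Finset.sum_eq_zero_iff_of_nonneg h1).mp h i (Finset.mem_univ i)
  have h3 : ∀ j ∈ Finset.univ, (0:ℝ) ≤ (A i j)^2 := by intro j _; positivity
  have := (Finset.sum_eq_zero_iff_of_nonneg h3).mp h2 j (Finset.mem_univ j)
  simpa using sq_eq_zero_iff.mp this

lemma frobSq_expand {m n : ℕ} (A B : Matrix (Fin m) (Fin n) ℝ) (t : ℝ) :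
    frobSq (A + t • B) = frobSq A + 2 * t * dotF A B + t ^ 2 * frobSq B := by
  simp only [frobSq, dotF, Matrix.add_apply, Matrix.smul_apply, smul_eq_mul,
    Finset.mul_sum]
  rw [← Finset.sum_add_distrib, ← Finset.sum_add_distrib]
  congr 1; ext i
  rw [← Finset.sum_add_distrib, ← Finset.sum_add_distrib]
  congr 1; ext j; ring

lemma frobSq_sub_expand {m n : ℕ} (A B : Matrix (Fin m) (Fin n) ℝ) :
    frobSq (A - B) = frobSq A - 2 * dotF A B + frobSq B := by
  have := frobSq_expand A (-B) 1
  simpa [dotF, frobSq, mul_comm, sub_eq_add_neg] using this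

lemma dotF_le_half {m n : ℕ} (A B : Matrix (Fin m) (Fin n) ℝ) :
    dotF A B ≤ (frobSq A + frobSq B) / 2 := by
  nlinarith [frobSq_nonneg (A - B), frobSq_sub_expand A B]

lemma psd_trace_nonneg {k : ℕ} {M : Matrix (Fin k) (Fin k) ℝ} (hM : M.PosSemidef) :
    0 ≤ M.trace := by
  exact hM.trace_nonneg

lemma spectral_pack {m n : ℕ} (W : Matrix (Fin m) (Fin n) ℝ) :
    ∃ (U : Matrix (Fin m) (Fin m) ℝ) (μ : Fin m → ℝ),
      Uᵀ * U = 1 ∧ U * Uᵀ = 1 ∧ W * Wᵀ = U * Matrix.diagonal μ * Uᵀ ∧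
      (∀ i, 0 ≤ μ i) ∧ nuclearNorm W = ∑ i, Real.sqrt (μ i) ∧
      W.rank = Fintype.card {i // μ i ≠ 0} := by
  have hH := wwT_posSemidef W
  have hHer := hH.1
  set U : Matrix (Fin m) (Fin m) ℝ := (Matrix.IsHermitian.eigenvectorUnitary hHer : Matrix (Fin m) (Fin m) ℝ) with hU
  set μ : Fin m → ℝ := hHer.eigenvalues with hμ
  have hstar : star U = Uᵀ := by
    rw [Matrix.star_eq_conjTranspose, Matrix.conjTranspose_eq_transpose_of_trivial]
  have h1 : U * Uᵀ = 1 := by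
    rw [← hstar]
    exact (Matrix.mem_unitaryGroup_iff).mp (Matrix.IsHermitian.eigenvectorUnitary hHer).2
  have h2 : Uᵀ * U = 1 := by
    rw [← hstar]
    exact (Matrix.mem_unitaryGroup_iff').mp (Matrix.IsHermitian.eigenvectorUnitary hHer).2
  have hspec : W * Wᵀ = U * Matrix.diagonal μ * Uᵀ := by
    have := hHer.spectral_theorem
    rw [Unitary.conjStarAlgAut_apply] at this
    rwa [← hU, hstar, RCLike.ofReal_real_eq_id, Function.id_comp] at this
  have hnonneg : ∀ i, 0 ≤ μ i := hH.eigenvalues_nonneg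
  refine ⟨U, μ, h2, h1, hspec, hnonneg, ?_, ?_⟩
  · -- nuclear norm
    set T : Matrix (Fin m) (Fin m) ℝ := U * Matrix.diagonal (fun i => Real.sqrt (μ i)) * Uᵀ with hT
    have hTpsd : T.PosSemidef := by
      have hd : (Matrix.diagonal (fun i => Real.sqrt (μ i))).PosSemidef :=
        Matrix.posSemidef_diagonal_iff.mpr (fun i => Real.sqrt_nonneg _)
      have := hd.mul_mul_conjTranspose_same U
      rwa [Matrix.conjTranspose_eq_transpose_of_trivial] at this
    have hTsq : T ^ 2 = W * Wᵀ := by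
      rw [sq, hT]
      calc U * Matrix.diagonal (fun i => Real.sqrt (μ i)) * Uᵀ *
            (U * Matrix.diagonal (fun i => Real.sqrt (μ i)) * Uᵀ)
          = U * (Matrix.diagonal (fun i => Real.sqrt (μ i)) * (Uᵀ * U) *
              Matrix.diagonal (fun i => Real.sqrt (μ i))) * Uᵀ := by
            simp only [Matrix.mul_assoc]
        _ = U * Matrix.diagonal μ * Uᵀ := by
            rw [h2, Matrix.mul_one, Matrix.diagonal_mul_diagonal,
              show (fun i => Real.sqrt (μ i) * Real.sqrt (μ i)) = μ from
                funext fun i => Real.mul_self_sqrt (hnonneg i)]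
        _ = W * Wᵀ := hspec.symm
    have hTeq : T = posSemidefSqrt hH := psd_eq_sqrt_of_sq_eq hTpsd hH hTsq
    rw [nuclearNorm, ← hTeq, hT]
    rw [Matrix.trace_mul_cycle, h2, Matrix.one_mul, Matrix.trace_diagonal]
  · -- rank
    rw [← Matrix.rank_self_mul_transpose]
    exact hHer.rank_eq_card_non_zero_eigs

lemma mul_transpose_self_eq_zero {m n : ℕ} {M : Matrix (Fin m) (Fin n) ℝ}
    (h : M * Mᵀ = 0) : M = 0 := by
  have h2 : (Mᵀ)ᴴ * Mᵀ = 0 := by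
    rw [Matrix.conjTranspose_eq_transpose_of_trivial, Matrix.transpose_transpose]
    exact h
  have := Matrix.conjTranspose_mul_self_eq_zero.mp h2
  simpa using congrArg Matrix.transpose this

lemma sum_single_mul_single {r : ℕ} (a b : Fin r) (x y : ℝ) :
    ∑ j : Fin r, (if j = a then x else 0) * (if j = b then y else 0)
      = if a = b then x * y else 0 := by
  rw [Finset.sum_eq_single a]
  · simp [mul_ite]
  · intro j _ hj; simp [hj]
  · simp

/-- Nuclear norm is at most half the sum of squared Frobenius norms of any factorization. -/
lemma nuclearNorm_factor_le {m n s : ℕ} (A : Matrix (Fin m) (Fin s) ℝ)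
    (B : Matrix (Fin n) (Fin s) ℝ) :
    nuclearNorm (A * Bᵀ) ≤ (frobSq A + frobSq B) / 2 := by
  set W := A * Bᵀ with hW
  obtain ⟨U, μ, h2, h1, hspec, hnonneg, hnn, -⟩ := spectral_pack W
  have hUWWU : Uᵀ * (W * Wᵀ) * U = Matrix.diagonal μ := by
    rw [hspec]
    calc Uᵀ * (U * Matrix.diagonal μ * Uᵀ) * U
        = (Uᵀ * U) * Matrix.diagonal μ * (Uᵀ * U) := by simp only [Matrix.mul_assoc]
      _ = Matrix.diagonal μ := by rw [h2, Matrix.one_mul, Matrix.mul_one]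
  set ν : Fin m → ℝ := fun i => if μ i = 0 then 0 else (Real.sqrt (μ i))⁻¹ with hν
  have hνμ : ∀ i, ν i * μ i = Real.sqrt (μ i) := by
    intro i
    simp only [hν]
    by_cases h : μ i = 0
    · rw [if_pos h, h]; simp
    · rw [if_neg h, inv_mul_eq_div, Real.div_sqrt]
  have hν2μ : ∀ i, ν i * ν i * μ i * (ν i * ν i) = ν i * ν i := by
    intro i
    by_cases h : μ i = 0
    · simp only [hν, if_pos h]; ring
    · have hs : Real.sqrt (μ i) * Real.sqrt (μ i) = μ i := Real.mul_self_sqrt (hnonneg i)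
      have hsne : Real.sqrt (μ i) ≠ 0 := by
        intro hc
        rw [hc] at hs; simp at hs; exact h hs.symm
      simp only [hν, if_neg h]
      field_simp
      nlinarith [hs]
  set Z : Matrix (Fin m) (Fin n) ℝ := U * Matrix.diagonal ν * Uᵀ * W with hZ
  have e2 : Zᵀ = Wᵀ * (U * Matrix.diagonal ν * Uᵀ) := by
    rw [hZ]
    simp [Matrix.transpose_mul, Matrix.diagonal_transpose, Matrix.mul_assoc]
  -- trace identity
  have htr : ((Z * B)ᵀ * A).trace = nuclearNorm W := by
    have e1 : (Z * B)ᵀ * A = Bᵀ * (Zᵀ * A) := by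
      rw [Matrix.transpose_mul, Matrix.mul_assoc]
    rw [e1, Matrix.trace_mul_comm]
    have e4 : Zᵀ * A * Bᵀ = Wᵀ * (U * Matrix.diagonal ν * Uᵀ) * W := by
      rw [e2, hW]
      simp only [Matrix.mul_assoc]
    rw [e4]
    have h6 : Wᵀ * (U * Matrix.diagonal ν * Uᵀ) * W
        = (Wᵀ * U) * (Matrix.diagonal ν * (Uᵀ * W)) := by
      simp only [Matrix.mul_assoc]
    rw [h6, Matrix.trace_mul_comm]
    have h7 : Matrix.diagonal ν * (Uᵀ * W) * (Wᵀ * U)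
        = Matrix.diagonal ν * (Uᵀ * (W * Wᵀ) * U) := by
      simp only [Matrix.mul_assoc]
    rw [h7, hUWWU, Matrix.diagonal_mul_diagonal, Matrix.trace_diagonal, hnn]
    exact Finset.sum_congr rfl fun i _ => hνμ i
  -- Z is a contraction on the relevant subspace
  have hM : Zᵀ * Z = Wᵀ * (U * Matrix.diagonal (fun i => ν i * ν i) * Uᵀ) * W := by
    rw [e2, hZ]
    calc Wᵀ * (U * Matrix.diagonal ν * Uᵀ) * (U * Matrix.diagonal ν * Uᵀ * W)
        = Wᵀ * (U * (Matrix.diagonal ν * (Uᵀ * U) * Matrix.diagonal ν) * Uᵀ) * W := by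
          simp only [Matrix.mul_assoc]
      _ = _ := by rw [h2, Matrix.mul_one, Matrix.diagonal_mul_diagonal]
  set M := Zᵀ * Z with hMdef
  have hMsymm : Mᵀ = M := by
    rw [hMdef, Matrix.transpose_mul, Matrix.transpose_transpose]
  have hfun : (fun i => ν i * ν i * μ i * (ν i * ν i)) = fun i => ν i * ν i :=
    funext hν2μ
  have hMidem : M * M = M := by
    rw [hM]
    calc Wᵀ * (U * Matrix.diagonal (fun i => ν i * ν i) * Uᵀ) * W *
          (Wᵀ * (U * Matrix.diagonal (fun i => ν i * ν i) * Uᵀ) * W)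
        = Wᵀ * (U * (Matrix.diagonal (fun i => ν i * ν i) * (Uᵀ * (W * Wᵀ) * U) *
            Matrix.diagonal (fun i => ν i * ν i)) * Uᵀ) * W := by
          simp only [Matrix.mul_assoc]
      _ = Wᵀ * (U * Matrix.diagonal (fun i => ν i * ν i) * Uᵀ) * W := by
          rw [hUWWU, Matrix.diagonal_mul_diagonal, Matrix.diagonal_mul_diagonal, hfun]
  have hOneM : (1 - M).PosSemidef := by
    have hsub : (1 - M)ᴴ * (1 - M) = 1 - M := by
      rw [Matrix.conjTranspose_eq_transpose_of_trivial]
      rw [Matrix.transpose_sub, Matrix.transpose_one, hMsymm]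
      rw [Matrix.sub_mul, Matrix.mul_sub, Matrix.mul_sub]
      rw [hMidem]
      simp
    rw [← hsub]
    exact Matrix.posSemidef_conjTranspose_mul_self _
  have hZB : frobSq (Z * B) ≤ frobSq B := by
    have e : Bᵀ * B - (Z * B)ᵀ * (Z * B) = Bᵀ * (1 - M) * B := by
      rw [Matrix.transpose_mul, Matrix.mul_sub, Matrix.sub_mul, Matrix.mul_one]
      rw [hMdef]
      simp only [Matrix.mul_assoc]
    have hpsd : (Bᵀ * (1 - M) * B).PosSemidef := by
      have := hOneM.mul_mul_conjTranspose_same Bᵀ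
      rwa [Matrix.conjTranspose_eq_transpose_of_trivial, Matrix.transpose_transpose] at this
    have := psd_trace_nonneg hpsd
    rw [← e, Matrix.trace_sub] at this
    rw [frobSq_eq_trace, frobSq_eq_trace]
    linarith
  -- combine
  have h1' : nuclearNorm W = dotF (Z * B) A := by
    rw [dotF_eq_trace, htr]
  rw [h1']
  calc dotF (Z * B) A ≤ (frobSq (Z * B) + frobSq A) / 2 := dotF_le_half _ _
    _ ≤ (frobSq A + frobSq B) / 2 := by linarith [hZB]

/-- Every rank ≤ r matrix admits a balanced factorization whose factors both have
squared Frobenius norm equal to the nuclear norm. -/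
lemma exists_min_factorization {m n r : ℕ} (W : Matrix (Fin m) (Fin n) ℝ)
    (hrank : W.rank ≤ r) :
    ∃ (A : Matrix (Fin m) (Fin r) ℝ) (B : Matrix (Fin n) (Fin r) ℝ),
      A * Bᵀ = W ∧ Aᵀ * A = Bᵀ * B ∧
      frobSq A = nuclearNorm W ∧ frobSq B = nuclearNorm W := by
  obtain ⟨U, μ, h2, h1, hspec, hnonneg, hnn, hrk⟩ := spectral_pack W
  have hUWWU : Uᵀ * (W * Wᵀ) * U = Matrix.diagonal μ := by
    rw [hspec]
    calc Uᵀ * (U * Matrix.diagonal μ * Uᵀ) * U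
        = (Uᵀ * U) * Matrix.diagonal μ * (Uᵀ * U) := by simp only [Matrix.mul_assoc]
      _ = Matrix.diagonal μ := by rw [h2, Matrix.one_mul, Matrix.mul_one]
  -- embedding of nonzero eigenvalue indices into Fin r
  have hcard : Fintype.card {i // μ i ≠ 0} ≤ Fintype.card (Fin r) := by
    rw [← hrk, Fintype.card_fin]; exact hrank
  obtain ⟨f⟩ := Function.Embedding.nonempty_iff_card_le.mpr hcard
  set c : Fin m → ℝ := fun i => Real.sqrt (Real.sqrt (μ i)) with hcdef
  have hcnz : ∀ i, μ i ≠ 0 → c i ≠ 0 := by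
    intro i hi
    have hpos : 0 < μ i := lt_of_le_of_ne (hnonneg i) (Ne.symm hi)
    exact ne_of_gt (Real.sqrt_pos.mpr (Real.sqrt_pos.mpr hpos))
  set P : Matrix (Fin m) (Fin r) ℝ :=
    fun i j => if h : μ i ≠ 0 then (if j = f ⟨i, h⟩ then c i else 0) else 0 with hP
  set P' : Matrix (Fin m) (Fin r) ℝ :=
    fun i j => if h : μ i ≠ 0 then (if j = f ⟨i, h⟩ then (c i)⁻¹ else 0) else 0 with hP'
  -- P * P'ᵀ = diagonal of indicator
  set ind : Fin m → ℝ := fun i => if μ i ≠ 0 then 1 else 0 with hind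
  have hPP' : P * P'ᵀ = Matrix.diagonal ind := by
    ext i k
    rw [Matrix.mul_apply]
    simp only [Matrix.transpose_apply]
    by_cases hi : μ i ≠ 0
    · by_cases hk : μ k ≠ 0
      · have : ∀ j, P i j * P' k j =
            (if j = f ⟨i, hi⟩ then c i else 0) * (if j = f ⟨k, hk⟩ then (c k)⁻¹ else 0) := by
          intro j; rw [hP, hP']; simp only [dif_pos hi, dif_pos hk]
        rw [Finset.sum_congr rfl fun j _ => this j, sum_single_mul_single]
        have hiff : (f ⟨i, hi⟩ = f ⟨k, hk⟩) ↔ i = k := by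
          constructor
          · intro h; exact Subtype.mk_eq_mk.mp (f.injective h)
          · intro h; subst h; rfl
        by_cases hik : i = k
        · subst hik
          rw [if_pos rfl, Matrix.diagonal_apply_eq]
          simp [hind, hi, mul_inv_cancel₀ (hcnz i hi)]
        · rw [if_neg (fun h => hik (hiff.mp h)), Matrix.diagonal_apply_ne _ hik]
      · have : ∀ j, P i j * P' k j = 0 := by
          intro j; rw [hP']; simp only [dif_neg hk, mul_zero]
        rw [Finset.sum_congr rfl fun j _ => this j, Finset.sum_const_zero]
        by_cases hik : i = k
        · subst hik; exact absurd hi hk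
        · rw [Matrix.diagonal_apply_ne _ hik]
    · have : ∀ j, P i j * P' k j = 0 := by
        intro j; rw [hP]; simp only [dif_neg hi, zero_mul]
      rw [Finset.sum_congr rfl fun j _ => this j, Finset.sum_const_zero]
      by_cases hik : i = k
      · subst hik; rw [Matrix.diagonal_apply_eq]; push_neg at hi; simp [hind, hi]
      · rw [Matrix.diagonal_apply_ne _ hik]
  -- P * Pᵀ = diagonal of sqrt μ
  have hPPT : P * Pᵀ = Matrix.diagonal (fun i => Real.sqrt (μ i)) := by
    ext i k
    rw [Matrix.mul_apply]
    simp only [Matrix.transpose_apply]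
    by_cases hi : μ i ≠ 0
    · by_cases hk : μ k ≠ 0
      · have : ∀ j, P i j * P k j =
            (if j = f ⟨i, hi⟩ then c i else 0) * (if j = f ⟨k, hk⟩ then c k else 0) := by
          intro j; rw [hP]; simp only [dif_pos hi, dif_pos hk]
        rw [Finset.sum_congr rfl fun j _ => this j, sum_single_mul_single]
        have hiff : (f ⟨i, hi⟩ = f ⟨k, hk⟩) ↔ i = k := by
          constructor
          · intro h; exact Subtype.mk_eq_mk.mp (f.injective h)
          · intro h; subst h; rfl
        by_cases hik : i = k
        · subst hik
          rw [if_pos rfl, Matrix.diagonal_apply_eq, hcdef]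
          exact Real.mul_self_sqrt (Real.sqrt_nonneg _)
        · rw [if_neg (fun h => hik (hiff.mp h)), Matrix.diagonal_apply_ne _ hik]
      · have : ∀ j, P i j * P k j = 0 := by
          intro j; rw [hP]; simp only [dif_neg hk, mul_zero]
        rw [Finset.sum_congr rfl fun j _ => this j, Finset.sum_const_zero]
        by_cases hik : i = k
        · subst hik; exact absurd hi hk
        · rw [Matrix.diagonal_apply_ne _ hik]
    · have : ∀ j, P i j * P k j = 0 := by
        intro j; rw [hP]; simp only [dif_neg hi, zero_mul]
      rw [Finset.sum_congr rfl fun j _ => this j, Finset.sum_const_zero]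
      by_cases hik : i = k
      · subst hik
        rw [Matrix.diagonal_apply_eq]
        push_neg at hi
        rw [hi, Real.sqrt_zero]
      · rw [Matrix.diagonal_apply_ne _ hik]
  -- balancedness data : Pᵀ * P = P'ᵀ * diagonal μ * P'
  have hbal : Pᵀ * P = P'ᵀ * Matrix.diagonal μ * P' := by
    have hPtP : ∀ j k, (Pᵀ * P) j k = ∑ i, P i j * P i k := by
      intro j k
      rw [Matrix.mul_apply]
      simp only [Matrix.transpose_apply]
    have hRHS : ∀ j k, (P'ᵀ * Matrix.diagonal μ * P') j k = ∑ i, μ i * (P' i j * P' i k) := by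
      intro j k
      rw [Matrix.mul_assoc, Matrix.mul_apply]
      apply Finset.sum_congr rfl
      intro i _
      rw [Matrix.transpose_apply, Matrix.diagonal_mul]
      ring
    ext j k
    rw [hPtP, hRHS]
    apply Finset.sum_congr rfl
    intro i _
    by_cases hi : μ i ≠ 0
    · rw [hP, hP']
      simp only [dif_pos hi]
      by_cases hj : j = f ⟨i, hi⟩
      · by_cases hk : k = f ⟨i, hi⟩
        · rw [if_pos hj, if_pos hk, if_pos hj, if_pos hk]
          have hpos : 0 < μ i := lt_of_le_of_ne (hnonneg i) (Ne.symm hi)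
          have hc2 : c i * c i = Real.sqrt (μ i) := Real.mul_self_sqrt (Real.sqrt_nonneg _)
          have hs2 : Real.sqrt (μ i) * Real.sqrt (μ i) = μ i := Real.mul_self_sqrt (le_of_lt hpos)
          have hcne := hcnz i hi
          field_simp
          nlinarith [hc2, hs2]
        · rw [if_pos hj, if_neg hk, if_pos hj, if_neg hk]; ring
      · rw [if_neg hj, if_neg hj]; ring
    · rw [hP, hP']
      simp only [dif_neg hi, zero_mul, mul_zero]
  -- define the factors
  refine ⟨U * P, Wᵀ * U * P', ?_, ?_, ?_, ?_⟩
  · -- product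
    have hQ : U * P * (Wᵀ * U * P')ᵀ = (U * Matrix.diagonal ind * Uᵀ) * W := by
      calc U * P * (Wᵀ * U * P')ᵀ = U * (P * P'ᵀ) * Uᵀ * W := by
            simp only [Matrix.transpose_mul, Matrix.transpose_transpose, Matrix.mul_assoc]
        _ = (U * Matrix.diagonal ind * Uᵀ) * W := by rw [hPP']
    rw [hQ]
    -- show projection fixes W
    set Q : Matrix (Fin m) (Fin m) ℝ := U * Matrix.diagonal ind * Uᵀ with hQdef
    have hQsymm : Qᵀ = Q := by
      rw [hQdef]
      simp only [Matrix.transpose_mul, Matrix.diagonal_transpose, Matrix.transpose_transpose]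
      simp only [Matrix.mul_assoc]
    have hindμ : ∀ i, ind i * μ i = μ i := by
      intro i
      by_cases h : μ i ≠ 0
      · simp [hind, h]
      · push_neg at h; simp [hind, h]
    have hμind : ∀ i, μ i * ind i = μ i := by
      intro i; rw [mul_comm]; exact hindμ i
    have hQWW : Q * (W * Wᵀ) = W * Wᵀ := by
      rw [hQdef, hspec]
      calc U * Matrix.diagonal ind * Uᵀ * (U * Matrix.diagonal μ * Uᵀ)
          = U * (Matrix.diagonal ind * (Uᵀ * U) * Matrix.diagonal μ) * Uᵀ := by
            simp only [Matrix.mul_assoc]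
        _ = U * Matrix.diagonal μ * Uᵀ := by
            rw [h2, Matrix.mul_one, Matrix.diagonal_mul_diagonal]
            rw [show (fun i => ind i * μ i) = μ from funext hindμ]
    have hWWQ : (W * Wᵀ) * Q = W * Wᵀ := by
      rw [hQdef, hspec]
      calc U * Matrix.diagonal μ * Uᵀ * (U * Matrix.diagonal ind * Uᵀ)
          = U * (Matrix.diagonal μ * (Uᵀ * U) * Matrix.diagonal ind) * Uᵀ := by
            simp only [Matrix.mul_assoc]
        _ = U * Matrix.diagonal μ * Uᵀ := by
            rw [h2, Matrix.mul_one, Matrix.diagonal_mul_diagonal]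
            rw [show (fun i => μ i * ind i) = μ from funext hμind]
    have hdiff : (Q * W - W) * (Q * W - W)ᵀ = 0 := by
      rw [Matrix.transpose_sub, Matrix.transpose_mul, hQsymm]
      rw [Matrix.sub_mul, Matrix.mul_sub, Matrix.mul_sub]
      have e1 : Q * W * (Wᵀ * Q) = W * Wᵀ := by
        calc Q * W * (Wᵀ * Q) = Q * (W * Wᵀ) * Q := by simp only [Matrix.mul_assoc]
          _ = (W * Wᵀ) * Q := by rw [hQWW]
          _ = W * Wᵀ := hWWQ
      have e2 : Q * W * Wᵀ = W * Wᵀ := by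
        rw [Matrix.mul_assoc]; exact hQWW
      have e3 : W * (Wᵀ * Q) = W * Wᵀ := by
        rw [← Matrix.mul_assoc]; exact hWWQ
      rw [e1, e2, e3]
      simp
    have := mul_transpose_self_eq_zero hdiff
    have hQW : Q * W = W := by
      have h' : Q * W - W = 0 := this
      have := sub_eq_zero.mp h'
      exact this
    exact hQW
  · -- balanced
    have hA : (U * P)ᵀ * (U * P) = Pᵀ * P := by
      calc (U * P)ᵀ * (U * P) = Pᵀ * (Uᵀ * U) * P := by
            simp only [Matrix.transpose_mul, Matrix.mul_assoc]
        _ = Pᵀ * P := by rw [h2, Matrix.mul_one]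
    have hB : (Wᵀ * U * P')ᵀ * (Wᵀ * U * P') = P'ᵀ * Matrix.diagonal μ * P' := by
      calc (Wᵀ * U * P')ᵀ * (Wᵀ * U * P')
          = P'ᵀ * (Uᵀ * (W * Wᵀ) * U) * P' := by
            simp only [Matrix.transpose_mul, Matrix.transpose_transpose, Matrix.mul_assoc]
        _ = P'ᵀ * Matrix.diagonal μ * P' := by rw [hUWWU]
    rw [hA, hB, hbal]
  · -- frobSq of first factor
    have hA : (U * P)ᵀ * (U * P) = Pᵀ * P := by
      calc (U * P)ᵀ * (U * P) = Pᵀ * (Uᵀ * U) * P := by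
            simp only [Matrix.transpose_mul, Matrix.mul_assoc]
        _ = Pᵀ * P := by rw [h2, Matrix.mul_one]
    rw [frobSq_eq_trace, hA, Matrix.trace_mul_comm, hPPT, Matrix.trace_diagonal, hnn]
  · -- frobSq of second factor
    have hB : (Wᵀ * U * P')ᵀ * (Wᵀ * U * P') = P'ᵀ * Matrix.diagonal μ * P' := by
      calc (Wᵀ * U * P')ᵀ * (Wᵀ * U * P')
          = P'ᵀ * (Uᵀ * (W * Wᵀ) * U) * P' := by
            simp only [Matrix.transpose_mul, Matrix.transpose_transpose, Matrix.mul_assoc]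
        _ = P'ᵀ * Matrix.diagonal μ * P' := by rw [hUWWU]
    rw [frobSq_eq_trace, hB, ← hbal, Matrix.trace_mul_comm, hPPT, Matrix.trace_diagonal, hnn]

/-- If two matrices have the same Gram matrix of rows, they differ by right
multiplication by an orthogonal matrix. -/
lemma gram_factor {ι : Type*} [Fintype ι] {r : ℕ}
    (X Y : Matrix ι (Fin r) ℝ) (h : X * Xᵀ = Y * Yᵀ) :
    ∃ Q : Matrix (Fin r) (Fin r) ℝ, Qᵀ * Q = 1 ∧ Y = X * Q := by
  classical
  -- dot products of images agree
  have hdot : ∀ v w : ι → ℝ,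
      dotProduct (Xᵀ *ᵥ v) (Xᵀ *ᵥ w) = dotProduct (Yᵀ *ᵥ v) (Yᵀ *ᵥ w) := by
    intro v w
    have e : ∀ Z : Matrix ι (Fin r) ℝ,
        dotProduct (Zᵀ *ᵥ v) (Zᵀ *ᵥ w) = dotProduct v ((Z * Zᵀ) *ᵥ w) := by
      intro Z
      rw [← Matrix.mulVec_mulVec, dotProduct_mulVec v Z, Matrix.mulVec_transpose,
        dotProduct_comm]
    rw [e X, e Y, h]
  set lin := WithLp.linearEquiv 2 ℝ (Fin r → ℝ) with hlin
  set S : (ι → ℝ) →ₗ[ℝ] EuclideanSpace ℝ (Fin r) := lin.symm.toLinearMap ∘ₗ Xᵀ.mulVecLin with hS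
  set S' : (ι → ℝ) →ₗ[ℝ] EuclideanSpace ℝ (Fin r) := lin.symm.toLinearMap ∘ₗ Yᵀ.mulVecLin with hS'
  have hSv : ∀ v, lin (S v) = Xᵀ *ᵥ v := by intro v; simp [hS, Matrix.mulVec_transpose]
  have hS'v : ∀ v, lin (S' v) = Yᵀ *ᵥ v := by intro v; simp [hS', Matrix.mulVec_transpose]
  have hinner : ∀ v w, (inner ℝ (S v) (S w) : ℝ) = inner ℝ (S' v) (S' w) := by
    intro v w
    have h1 : (inner ℝ (S v) (S w) : ℝ) = dotProduct (Xᵀ *ᵥ v) (Xᵀ *ᵥ w) := by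
      rw [← hSv v, ← hSv w]
      simp [PiLp.inner_apply, RCLike.inner_apply, conj_trivial, dotProduct, hlin]
      exact Finset.sum_congr rfl fun _ _ => mul_comm _ _
    have h2 : (inner ℝ (S' v) (S' w) : ℝ) = dotProduct (Yᵀ *ᵥ v) (Yᵀ *ᵥ w) := by
      rw [← hS'v v, ← hS'v w]
      simp [PiLp.inner_apply, RCLike.inner_apply, conj_trivial, dotProduct, hlin]
      exact Finset.sum_congr rfl fun _ _ => mul_comm _ _
    rw [h1, h2, hdot]
  have hnorm : ∀ v, ‖S' v‖ = ‖S v‖ := by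
    intro v
    have h1 : ‖S' v‖ ^ 2 = ‖S v‖ ^ 2 := by
      rw [← real_inner_self_eq_norm_sq, ← real_inner_self_eq_norm_sq, hinner]
    rw [← Real.sqrt_sq (norm_nonneg (S' v)), ← Real.sqrt_sq (norm_nonneg (S v)), h1]
  -- build isometry from range S
  have hle : LinearMap.ker S ≤ LinearMap.ker S' := by
    intro v hv
    rw [LinearMap.mem_ker] at hv ⊢
    have := hnorm v
    rw [hv, norm_zero] at this
    exact norm_eq_zero.mp this
  set Sbar : ((ι → ℝ) ⧸ LinearMap.ker S) →ₗ[ℝ] EuclideanSpace ℝ (Fin r) := (LinearMap.ker S).liftQ S' hle with hSbar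
  set T := LinearMap.quotKerEquivRange S with hT
  set φ : (LinearMap.range S) →ₗ[ℝ] EuclideanSpace ℝ (Fin r) := Sbar ∘ₗ T.symm.toLinearMap with hφ
  have hφval : ∀ v : ι → ℝ, φ ⟨S v, LinearMap.mem_range_self S v⟩ = S' v := by
    intro v
    have hTv : T ((LinearMap.ker S).mkQ v) = ⟨S v, LinearMap.mem_range_self S v⟩ := by
      apply Subtype.ext
      simp [hT, LinearMap.quotKerEquivRange]
    have : T.symm ⟨S v, LinearMap.mem_range_self S v⟩ = (LinearMap.ker S).mkQ v := by
      rw [← hTv, LinearEquiv.symm_apply_apply]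
    rw [hφ]
    simp only [LinearMap.coe_comp, Function.comp_apply, LinearEquiv.coe_toLinearMap]
    rw [this, hSbar]
    simp [Submodule.mkQ_apply]
  have hφnorm : ∀ u : LinearMap.range S, ‖φ u‖ = ‖(u : EuclideanSpace ℝ (Fin r))‖ := by
    rintro ⟨u, v, hv⟩
    have : (⟨u, ⟨v, hv⟩⟩ : LinearMap.range S) = ⟨S v, LinearMap.mem_range_self S v⟩ := by
      apply Subtype.ext; exact hv.symm
    rw [this, hφval v]
    simp only []
    rw [hnorm v]
  set φiso : (LinearMap.range S) →ₗᵢ[ℝ] EuclideanSpace ℝ (Fin r) := ⟨φ, hφnorm⟩ with hφiso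
  set g := φiso.extend with hg
  have hkey : ∀ v, S' v = g (S v) := by
    intro v
    have := φiso.extend_apply ⟨S v, LinearMap.mem_range_self S v⟩
    rw [hg, this]
    show S' v = φiso ⟨S v, _⟩
    rw [hφiso]
    exact (hφval v).symm
  -- convert to a matrix
  set g' : (Fin r → ℝ) →ₗ[ℝ] (Fin r → ℝ) :=
    lin.toLinearMap ∘ₗ g.toLinearMap ∘ₗ lin.symm.toLinearMap with hg'
  set G : Matrix (Fin r) (Fin r) ℝ := LinearMap.toMatrix' g' with hG
  have hGv : ∀ x : Fin r → ℝ, G *ᵥ x = lin (g (lin.symm x)) := by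
    intro x
    have h0 : G *ᵥ x = g' x := by
      rw [hG, ← Matrix.toLin'_apply, Matrix.toLin'_toMatrix']
    rw [h0, hg']
    simp
  have hYX : Yᵀ = G * Xᵀ := by
    have : ∀ v, Yᵀ *ᵥ v = (G * Xᵀ) *ᵥ v := by
      intro v
      rw [← Matrix.mulVec_mulVec, hGv, ← hSv v, LinearEquiv.symm_apply_apply, ← hkey v,
        hS'v v]
    ext i j
    simpa using congrFun (this (Pi.single j 1)) i
  -- orthogonality
  have hGTG : Gᵀ * G = 1 := by
    ext j k
    have hcol : ∀ j : Fin r, (fun i => G i j) = lin (g (lin.symm (Pi.single j 1))) := by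
      intro j
      have := hGv (Pi.single j 1)
      rw [Matrix.mulVec_single] at this
      simp [mul_one] at this
      exact this
    rw [Matrix.mul_apply]
    simp only [Matrix.transpose_apply]
    have hinner2 : (inner ℝ (g (lin.symm (Pi.single j 1))) (g (lin.symm (Pi.single k 1))) : ℝ)
        = inner ℝ (lin.symm (Pi.single j 1) : EuclideanSpace ℝ (Fin r)) (lin.symm (Pi.single k 1) : EuclideanSpace ℝ (Fin r)) :=
      g.inner_map_map _ _
    have hcol' : ∀ (j i : Fin r), G i j = g (lin.symm (Pi.single j 1)) i := by
      intro j i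
      have := congrFun (hcol j) i
      simpa [hlin] using this
    have hL : ∑ i, G i j * G i k
        = (inner ℝ (g (lin.symm (Pi.single j 1))) (g (lin.symm (Pi.single k 1))) : ℝ) := by
      rw [PiLp.inner_apply]
      apply Finset.sum_congr rfl
      intro i _
      simp only [RCLike.inner_apply, conj_trivial]
      rw [← hcol' j i, ← hcol' k i]
      exact mul_comm _ _
    rw [hL, hinner2]
    rw [PiLp.inner_apply]
    by_cases hjk : j = k
    · subst hjk
      rw [Matrix.one_apply_eq]
      simp [Pi.single_apply, hlin, Finset.sum_ite_eq']
    · rw [Matrix.one_apply_ne hjk]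
      simp [Pi.single_apply, hlin, Finset.sum_ite_eq', hjk]
  refine ⟨Gᵀ, ?_, ?_⟩
  · rw [Matrix.transpose_transpose]
    exact mul_eq_one_comm.mp hGTG
  · have := congrArg Matrix.transpose hYX
    rwa [Matrix.transpose_transpose, Matrix.transpose_mul, Matrix.transpose_transpose] at this

/-- If `AᵀA = BᵀB` then `A * Aᵀ` is the PSD square root of `(ABᵀ)(ABᵀ)ᵀ`. -/
lemma balanced_sqrt {m n r : ℕ} (A : Matrix (Fin m) (Fin r) ℝ) (B : Matrix (Fin n) (Fin r) ℝ)
    (hbal : Aᵀ * A = Bᵀ * B) :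
    posSemidefSqrt (wwT_posSemidef (A * Bᵀ)) = A * Aᵀ := by
  have hpsd : (A * Aᵀ).PosSemidef := wwT_posSemidef A
  have hsq : (A * Aᵀ) ^ 2 = (A * Bᵀ) * (A * Bᵀ)ᵀ := by
    rw [sq, Matrix.transpose_mul, Matrix.transpose_transpose]
    calc A * Aᵀ * (A * Aᵀ) = A * (Aᵀ * A) * Aᵀ := by simp only [Matrix.mul_assoc]
      _ = A * (Bᵀ * B) * Aᵀ := by rw [hbal]
      _ = A * Bᵀ * (B * Aᵀ) := by simp only [Matrix.mul_assoc]
  exact (psd_eq_sqrt_of_sq_eq hpsd (wwT_posSemidef (A * Bᵀ)) hsq).symm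

lemma balanced_nuclear {m n r : ℕ} (A : Matrix (Fin m) (Fin r) ℝ)
    (B : Matrix (Fin n) (Fin r) ℝ) (hbal : Aᵀ * A = Bᵀ * B) :
    nuclearNorm (A * Bᵀ) = (frobSq A + frobSq B) / 2 := by
  rw [nuclearNorm, balanced_sqrt A B hbal, frobSq_eq_trace, frobSq_eq_trace, ← hbal,
    Matrix.trace_mul_comm A Aᵀ]
  ring

lemma frobSq_mul_orth {m r : ℕ} (M : Matrix (Fin m) (Fin r) ℝ)
    (Q : Matrix (Fin r) (Fin r) ℝ) (hQ : Qᵀ * Q = 1) :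
    frobSq (M * Q) = frobSq M := by
  have hQQT : Q * Qᵀ = 1 := mul_eq_one_comm.mp hQ
  rw [frobSq_eq_trace, frobSq_eq_trace, Matrix.transpose_mul]
  calc (Qᵀ * Mᵀ * (M * Q)).trace = ((Qᵀ * (Mᵀ * M)) * Q).trace := by
        simp only [Matrix.mul_assoc]
    _ = (Q * (Qᵀ * (Mᵀ * M))).trace := Matrix.trace_mul_comm _ _
    _ = ((Q * Qᵀ) * (Mᵀ * M)).trace := by simp only [Matrix.mul_assoc]
    _ = (Mᵀ * M).trace := by rw [hQQT, Matrix.one_mul]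

/-- Balanced factorizations of the same matrix with the same Gram matrices differ
by an orthogonal matrix. -/
lemma factor_orthogonal {m n r : ℕ} (A A₀ : Matrix (Fin m) (Fin r) ℝ)
    (B B₀ : Matrix (Fin n) (Fin r) ℝ)
    (hAA : A * Aᵀ = A₀ * A₀ᵀ) (hBB : B * Bᵀ = B₀ * B₀ᵀ) (hAB : A * Bᵀ = A₀ * B₀ᵀ) :
    ∃ Q : Matrix (Fin r) (Fin r) ℝ, Qᵀ * Q = 1 ∧ A₀ = A * Q ∧ B₀ = B * Q := by
  have hBA : B * Aᵀ = B₀ * A₀ᵀ := by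
    have := congrArg Matrix.transpose hAB
    rwa [Matrix.transpose_mul, Matrix.transpose_mul, Matrix.transpose_transpose,
      Matrix.transpose_transpose] at this
  set X := Matrix.fromRows A B with hX
  set Y := Matrix.fromRows A₀ B₀ with hY
  have hgram : X * Xᵀ = Y * Yᵀ := by
    rw [hX, hY, Matrix.transpose_fromRows, Matrix.transpose_fromRows,
      Matrix.fromRows_mul_fromCols, Matrix.fromRows_mul_fromCols,
      hAA, hBB, hAB, hBA]
  obtain ⟨Q, hQ, hYX⟩ := gram_factor X Y hgram
  refine ⟨Q, hQ, ?_, ?_⟩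
  · have h1 : Matrix.fromRows A₀ B₀ = Matrix.fromRows (A * Q) (B * Q) := by
      rw [← hY, hYX, hX, Matrix.fromRows_mul]
    exact ((Matrix.fromRows_ext_iff _ _ _ _).mp h1).1
  · have h1 : Matrix.fromRows A₀ B₀ = Matrix.fromRows (A * Q) (B * Q) := by
      rw [← hY, hYX, hX, Matrix.fromRows_mul]
    exact ((Matrix.fromRows_ext_iff _ _ _ _).mp h1).2


lemma balanced_of_localMin {m n r : ℕ} (lam : ℝ) (hlam : lam ≠ 0)
    (L : Matrix (Fin m) (Fin n) ℝ → ℝ) (hL : Differentiable ℝ L)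
    (A : Matrix (Fin m) (Fin r) ℝ) (B : Matrix (Fin n) (Fin r) ℝ)
    (hmin : IsLocalMin
      (fun p : Matrix (Fin m) (Fin r) ℝ × Matrix (Fin n) (Fin r) ℝ =>
        L (p.1 * p.2ᵀ) + lam / 2 * (frobSq p.1 + frobSq p.2)) (A, B)) :
    Aᵀ * A = Bᵀ * B := by
  set X : Matrix (Fin r) (Fin r) ℝ := Aᵀ * A - Bᵀ * B with hX
  have hXsymm : Xᵀ = X := by
    simp [hX, Matrix.transpose_sub, Matrix.transpose_mul]
  set C : Matrix (Fin m) (Fin n) ℝ := A * X * X * Bᵀ with hC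
  set f := (fun p : Matrix (Fin m) (Fin r) ℝ × Matrix (Fin n) (Fin r) ℝ =>
        L (p.1 * p.2ᵀ) + lam / 2 * (frobSq p.1 + frobSq p.2)) with hf
  set c : ℝ → Matrix (Fin m) (Fin r) ℝ × Matrix (Fin n) (Fin r) ℝ :=
    fun t => (A + t • (A * X), B + (-t) • (B * Xᵀ)) with hc
  have hprod : ∀ t : ℝ, (A + t • (A * X)) * (B + (-t) • (B * Xᵀ))ᵀ
      = A * Bᵀ - (t * t) • C := by
    intro t
    simp only [Matrix.transpose_add, Matrix.transpose_smul, Matrix.transpose_mul,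
      Matrix.transpose_transpose, Matrix.add_mul, Matrix.mul_add, Matrix.smul_mul,
      Matrix.mul_smul, smul_smul, hC]
    simp only [← Matrix.mul_assoc]
    module
  -- local min of g at 0
  have hcont : ContinuousAt c 0 := by fun_prop
  have hc0 : c 0 = (A, B) := by simp [hc]
  have hgmin : IsLocalMin (fun t => f (c t)) 0 := by
    have ht : Filter.Tendsto c (nhds 0) (nhds (A, B)) := by
      simpa [hc0] using hcont.tendsto
    have := ht.eventually hmin
    simpa [IsLocalMin, IsMinFilter, hc0] using this
  -- derivative of g at 0
  set a := dotF A (A * X) with ha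
  set b := dotF B (B * Xᵀ) with hb
  have hgeq : (fun t => f (c t)) = fun t =>
      L (A * Bᵀ - (t * t) • C) + lam / 2 *
        ((frobSq A + 2 * t * a + t ^ 2 * frobSq (A * X)) +
         (frobSq B + 2 * (-t) * b + (-t) ^ 2 * frobSq (B * Xᵀ))) := by
    funext t
    simp only [hf, hc, hprod t, frobSq_expand, ← ha, ← hb]
  have hD1 : HasDerivAt (fun t : ℝ => A * Bᵀ - (t * t) • C)
      (0 : Matrix (Fin m) (Fin n) ℝ) 0 := by
    have h1 : HasDerivAt (fun t : ℝ => t * t) 0 0 := by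
      have h0 := (hasDerivAt_id' (0:ℝ)).mul (hasDerivAt_id' (0:ℝ))
      simp only [mul_zero, zero_mul, add_zero] at h0
      exact h0
    have h2 := h1.smul_const C
    have h3 := h2.const_sub (A * Bᵀ)
    simp only [zero_smul, neg_zero] at h3
    exact h3
  have hDL : HasDerivAt (fun t : ℝ => L (A * Bᵀ - (t * t) • C)) 0 0 := by
    have := (hL (A * Bᵀ - ((0:ℝ) * 0) • C)).hasFDerivAt.comp_hasDerivAt 0 hD1
    exact this.congr_deriv (map_zero _)
  have hpoly : HasDerivAt (fun t : ℝ =>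
      (frobSq A + 2 * t * a + t ^ 2 * frobSq (A * X)) +
      (frobSq B + 2 * (-t) * b + (-t) ^ 2 * frobSq (B * Xᵀ)))
      (2 * a - 2 * b) 0 := by
    have hid := hasDerivAt_id (0:ℝ)
    have h1 : HasDerivAt (fun t : ℝ => 2 * t * a) (2 * a) 0 := by
      simpa using (hid.const_mul 2).mul_const a
    have h2 : HasDerivAt (fun t : ℝ => t ^ 2 * frobSq (A * X)) 0 0 := by
      simpa using (hid.pow 2).mul_const (frobSq (A * X))
    have h3 : HasDerivAt (fun t : ℝ => 2 * (-t) * b) (-(2 * b)) 0 := by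
      have : HasDerivAt (fun t : ℝ => -t) (-1) 0 := hid.neg
      simpa using ((this.const_mul 2).mul_const b)
    have h4 : HasDerivAt (fun t : ℝ => (-t) ^ 2 * frobSq (B * Xᵀ)) 0 0 := by
      have : HasDerivAt (fun t : ℝ => -t) (-1) 0 := hid.neg
      simpa using (this.pow 2).mul_const (frobSq (B * Xᵀ))
    have := (((h1.const_add (frobSq A)).add h2).add
      (((h3.const_add (frobSq B)).add h4)))
    exact this.congr_deriv (by ring)
  have hg : HasDerivAt (fun t => f (c t)) (lam / 2 * (2 * a - 2 * b)) 0 := by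
    rw [hgeq]
    exact (hDL.add (hpoly.const_mul (lam / 2))).congr_deriv (by ring)
  have hzero := hgmin.hasDerivAt_eq_zero hg
  have hab : a = b := by
    have : 2 * a - 2 * b = 0 := by
      rcases mul_eq_zero.mp hzero with h | h
      · exact absurd h (by simpa using hlam)
      · exact h
    linarith
  -- conclude
  have htr : (X * X).trace = 0 := by
    have ha' : a = (Aᵀ * A * X).trace := by
      rw [ha, dotF_eq_trace, Matrix.mul_assoc]
    have hb' : b = (Bᵀ * B * X).trace := by
      rw [hb, dotF_eq_trace, Matrix.mul_assoc, hXsymm]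
    have : (Aᵀ * A * X).trace - (Bᵀ * B * X).trace = 0 := by
      rw [← ha', ← hb', hab]; ring
    calc (X * X).trace = ((Aᵀ * A - Bᵀ * B) * X).trace := by rw [← hX]
      _ = (Aᵀ * A * X).trace - (Bᵀ * B * X).trace := by
          rw [Matrix.sub_mul, Matrix.trace_sub]
      _ = 0 := this
  have : frobSq X = 0 := by
    rw [frobSq_eq_trace, hXsymm, htr]
  have hX0 := frobSq_eq_zero this
  have : Aᵀ * A - Bᵀ * B = 0 := hX0
  exact sub_eq_zero.mp this

section cont
variable {m n r : ℕ}
lemma frobSq_continuous : Continuous (fun M : Matrix (Fin m) (Fin n) ℝ => frobSq M) := by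
  unfold frobSq
  apply continuous_finset_sum
  intro i _
  apply continuous_finset_sum
  intro j _
  exact (((continuous_apply j).comp (continuous_apply i)).pow 2)

lemma prodmul_continuous :
    Continuous (fun p : Matrix (Fin m) (Fin r) ℝ × Matrix (Fin n) (Fin r) ℝ => p.1 * p.2ᵀ) :=
  continuous_fst.matrix_mul continuous_snd.matrix_transpose
end cont

lemma norm_le_sqrt_frobSq {m n : ℕ} {M : Matrix (Fin m) (Fin n) ℝ} {c : ℝ}
    (h : frobSq M ≤ c) : ‖M‖ ≤ Real.sqrt c := by
  rw [Matrix.norm_le_iff (Real.sqrt_nonneg c)]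
  intro i j
  have h1 : (M i j) ^ 2 ≤ frobSq M := by
    unfold frobSq
    calc (M i j) ^ 2 ≤ ∑ j', (M i j') ^ 2 :=
          Finset.single_le_sum (f := fun j' => (M i j') ^ 2)
            (fun _ _ => sq_nonneg _) (Finset.mem_univ j)
      _ ≤ ∑ i', ∑ j', (M i' j') ^ 2 :=
          Finset.single_le_sum (f := fun i' => ∑ j', (M i' j') ^ 2)
            (fun i' _ => Finset.sum_nonneg fun _ _ => sq_nonneg _) (Finset.mem_univ i)
  calc ‖M i j‖ = Real.sqrt ((M i j) ^ 2) := by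
        rw [Real.sqrt_sq_eq_abs]; rfl
    _ ≤ Real.sqrt c := Real.sqrt_le_sqrt (le_trans h1 h)

lemma nuclearNorm_nonneg {m n : ℕ} (W : Matrix (Fin m) (Fin n) ℝ) : 0 ≤ nuclearNorm W := by
  rw [nuclearNorm]
  exact (posSemidefSqrt_posSemidef (wwT_posSemidef W)).trace_nonneg

set_option maxHeartbeats 1600000 in
/-- a local minimum `(A, B)` of the L2-regularized factorized loss
`L(ABᵀ) + (λ/2)(‖A‖_F² + ‖B‖_F²)` (λ > 0, L differentiable, `m, n ≥ r`) is
balanced (`AᵀA = BᵀB`) and `W = ABᵀ` is a local minimum of the nuclear-norm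
regularized loss `L(W) + λ‖W‖_*` restricted to matrices of rank at most `r`. -/
theorem localMin_L2_iff_localMin_nuclear {m n r : ℕ} (hm : r ≤ m) (hn : r ≤ n)
    (lam : ℝ) (hlam : 0 < lam)
    (L : Matrix (Fin m) (Fin n) ℝ → ℝ) (hL : Differentiable ℝ L)
    (A : Matrix (Fin m) (Fin r) ℝ) (B : Matrix (Fin n) (Fin r) ℝ)
    (hmin : IsLocalMin
      (fun p : Matrix (Fin m) (Fin r) ℝ × Matrix (Fin n) (Fin r) ℝ =>
        L (p.1 * p.2ᵀ) + lam / 2 * (frobSq p.1 + frobSq p.2)) (A, B)) :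
    Aᵀ * A = Bᵀ * B ∧
    IsLocalMinOn (fun W : Matrix (Fin m) (Fin n) ℝ => L W + lam * nuclearNorm W)
      {W : Matrix (Fin m) (Fin n) ℝ | W.rank ≤ r} (A * Bᵀ) := by
  have hbal : Aᵀ * A = Bᵀ * B := balanced_of_localMin lam (ne_of_gt hlam) L hL A B hmin
  refine ⟨hbal, ?_⟩
  set W₀ := A * Bᵀ with hW₀
  set fstar : Matrix (Fin m) (Fin n) ℝ → ℝ := fun W => L W + lam * nuclearNorm W with hfstar
  set f2 : Matrix (Fin m) (Fin r) ℝ × Matrix (Fin n) (Fin r) ℝ → ℝ :=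
    fun p => L (p.1 * p.2ᵀ) + lam / 2 * (frobSq p.1 + frobSq p.2) with hf2
  have hWnn : nuclearNorm W₀ = (frobSq A + frobSq B) / 2 := balanced_nuclear A B hbal
  have hfAB : f2 (A, B) = fstar W₀ := by
    simp only [hf2, hfstar, hWnn]
    ring
  by_contra hnot
  have hfreq : ∃ᶠ x in nhdsWithin W₀ {W : Matrix (Fin m) (Fin n) ℝ | W.rank ≤ r},
      fstar x < fstar W₀ := by
    have h1 := Filter.not_eventually.mp hnot
    apply h1.mono
    intro x hx
    exact not_le.mp hx
  -- continuity of L near W₀ gives a uniform bound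
  have hLev : ∀ᶠ x in nhds W₀, |L x - L W₀| < 1 := by
    have hLc : Filter.Tendsto L (nhds W₀) (nhds (L W₀)) := hL.continuous.continuousAt
    filter_upwards [hLc (Metric.ball_mem_nhds (L W₀) one_pos)] with x hx
    have := Metric.mem_ball.mp hx
    rwa [Real.dist_eq] at this
  -- selection of a minimizing sequence
  have hsel : ∀ k : ℕ, ∃ x : Matrix (Fin m) (Fin n) ℝ, x.rank ≤ r ∧
      dist x W₀ < 1 / (k + 1) ∧ fstar x < fstar W₀ ∧ |L x - L W₀| < 1 := by
    intro k
    have hpos : (0:ℝ) < 1 / (k + 1) := by positivity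
    have hball : ∀ᶠ x in nhds W₀, dist x W₀ < 1 / (k + 1) := by
      filter_upwards [Metric.ball_mem_nhds W₀ hpos] with x hx
      exact Metric.mem_ball.mp hx
    have hev : ∀ᶠ x in nhdsWithin W₀ {W : Matrix (Fin m) (Fin n) ℝ | W.rank ≤ r},
        (dist x W₀ < 1 / (k + 1) ∧ |L x - L W₀| < 1) ∧ x.rank ≤ r := by
      apply Filter.Eventually.and
      · exact (hball.and hLev).filter_mono nhdsWithin_le_nhds
      · filter_upwards [self_mem_nhdsWithin] with x hx using hx
    obtain ⟨x, hx1, hx2⟩ := (hfreq.and_eventually hev).exists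
    exact ⟨x, hx2.2, hx2.1.1, hx1, hx2.1.2⟩
  choose Wseq hrank hdist hlt hLbd using hsel
  choose As Bs hABk hbalk hfsA hfsB using fun k => exists_min_factorization (Wseq k) (hrank k)
  -- uniform bound on the factors
  set Cnn : ℝ := (fstar W₀ - L W₀ + 1) / lam with hCnn
  have hnnb : ∀ k, nuclearNorm (Wseq k) ≤ Cnn := by
    intro k
    have h1 : L (Wseq k) + lam * nuclearNorm (Wseq k) < fstar W₀ := hlt k
    have h2 : L W₀ - 1 < L (Wseq k) := by
      have := hLbd k; rw [abs_lt] at this; linarith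
    rw [hCnn, le_div_iff₀ hlam]
    nlinarith
  have hR : ∀ k, ‖(As k, Bs k)‖ ≤ Real.sqrt Cnn := by
    intro k
    have hA : ‖As k‖ ≤ Real.sqrt Cnn :=
      norm_le_sqrt_frobSq (le_trans (le_of_eq (hfsA k)) (hnnb k))
    have hB : ‖Bs k‖ ≤ Real.sqrt Cnn :=
      norm_le_sqrt_frobSq (le_trans (le_of_eq (hfsB k)) (hnnb k))
    rw [Prod.norm_def]
    exact max_le hA hB
  -- Bolzano–Weierstrass
  have hmem : ∀ k, (As k, Bs k) ∈ Metric.closedBall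
      (0 : Matrix (Fin m) (Fin r) ℝ × Matrix (Fin n) (Fin r) ℝ) (Real.sqrt Cnn) := by
    intro k
    rw [Metric.mem_closedBall, dist_zero_right]
    exact hR k
  obtain ⟨pL, -, ψ, hψmono, hψtend⟩ :=
    tendsto_subseq_of_bounded Metric.isBounded_closedBall hmem
  -- limit identities
  have hWlim : Filter.Tendsto Wseq Filter.atTop (nhds W₀) := by
    apply tendsto_iff_dist_tendsto_zero.mpr
    apply squeeze_zero (fun k => dist_nonneg) (fun k => le_of_lt (hdist k))
    exact tendsto_one_div_add_atTop_nhds_zero_nat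
  have hWψ : Filter.Tendsto (fun j => Wseq (ψ j)) Filter.atTop (nhds W₀) :=
    hWlim.comp hψmono.tendsto_atTop
  have hp : pL.1 * pL.2ᵀ = W₀ := by
    have hprodlim := (prodmul_continuous.tendsto pL).comp hψtend
    apply tendsto_nhds_unique _ hWψ
    have heq : ((fun p : Matrix (Fin m) (Fin r) ℝ × Matrix (Fin n) (Fin r) ℝ => p.1 * p.2ᵀ) ∘
        ((fun k => (As k, Bs k)) ∘ ψ)) = fun j => Wseq (ψ j) := by
      funext j
      simp only [Function.comp_apply]
      exact hABk (ψ j)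
    rwa [heq] at hprodlim
  have hbalPL : pL.1ᵀ * pL.1 = pL.2ᵀ * pL.2 := by
    have hcont : Continuous (fun p : Matrix (Fin m) (Fin r) ℝ × Matrix (Fin n) (Fin r) ℝ =>
        p.1ᵀ * p.1 - p.2ᵀ * p.2) :=
      (continuous_fst.matrix_transpose.matrix_mul continuous_fst).sub
        (continuous_snd.matrix_transpose.matrix_mul continuous_snd)
    have h1 := (hcont.tendsto pL).comp hψtend
    have h2 : ((fun p : Matrix (Fin m) (Fin r) ℝ × Matrix (Fin n) (Fin r) ℝ =>
        p.1ᵀ * p.1 - p.2ᵀ * p.2) ∘ ((fun k => (As k, Bs k)) ∘ ψ))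
        = fun _ => (0 : Matrix (Fin r) (Fin r) ℝ) := by
      funext j
      simp only [Function.comp_apply]
      rw [hbalk (ψ j)]
      simp
    rw [h2] at h1
    have := tendsto_nhds_unique h1 tendsto_const_nhds
    exact sub_eq_zero.mp this
  -- transfer the Gram matrices
  have hAA : A * Aᵀ = pL.1 * pL.1ᵀ := by
    have h1 : posSemidefSqrt (wwT_posSemidef (pL.1 * pL.2ᵀ)) = pL.1 * pL.1ᵀ :=
      balanced_sqrt pL.1 pL.2 hbalPL
    rw [show pL.1 * pL.2ᵀ = W₀ from hp] at h1
    rw [← h1, hW₀]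
    exact (balanced_sqrt A B hbal).symm
  have hBB : B * Bᵀ = pL.2 * pL.2ᵀ := by
    have hp' : pL.2 * pL.1ᵀ = B * Aᵀ := by
      have := congrArg Matrix.transpose hp
      rwa [Matrix.transpose_mul, Matrix.transpose_transpose, hW₀, Matrix.transpose_mul,
        Matrix.transpose_transpose] at this
    have h1 : posSemidefSqrt (wwT_posSemidef (pL.2 * pL.1ᵀ)) = pL.2 * pL.2ᵀ :=
      balanced_sqrt pL.2 pL.1 hbalPL.symm
    rw [hp'] at h1
    rw [← h1]
    exact (balanced_sqrt B A hbal.symm).symm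
  have hABPL : A * Bᵀ = pL.1 * pL.2ᵀ := by rw [hp, hW₀]
  obtain ⟨Q, hQ, hAQ, hBQ⟩ := factor_orthogonal A pL.1 B pL.2 hAA hBB hABPL
  have hQQT : Q * Qᵀ = 1 := mul_eq_one_comm.mp hQ
  -- transfer the local minimum to pL
  set Φ : Matrix (Fin m) (Fin r) ℝ × Matrix (Fin n) (Fin r) ℝ →
      Matrix (Fin m) (Fin r) ℝ × Matrix (Fin n) (Fin r) ℝ :=
    fun p => (p.1 * Qᵀ, p.2 * Qᵀ) with hΦ
  have hΦcont : Continuous Φ :=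
    (continuous_fst.matrix_mul continuous_const).prodMk
      (continuous_snd.matrix_mul continuous_const)
  have hΦval : ∀ p, f2 (Φ p) = f2 p := by
    intro p
    have hprod : (p.1 * Qᵀ) * (p.2 * Qᵀ)ᵀ = p.1 * p.2ᵀ := by
      rw [Matrix.transpose_mul, Matrix.transpose_transpose]
      calc p.1 * Qᵀ * (Q * p.2ᵀ) = p.1 * (Qᵀ * Q) * p.2ᵀ := by simp only [Matrix.mul_assoc]
        _ = p.1 * p.2ᵀ := by rw [hQ, Matrix.mul_one]
    have hQT : (Qᵀ)ᵀ * Qᵀ = 1 := by rw [Matrix.transpose_transpose]; exact hQQT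
    simp only [hΦ, hf2, hprod, frobSq_mul_orth p.1 Qᵀ hQT, frobSq_mul_orth p.2 Qᵀ hQT]
  have hΦpL : Φ pL = (A, B) := by
    have e1 : pL.1 * Qᵀ = A := by
      rw [hAQ, Matrix.mul_assoc, hQQT, Matrix.mul_one]
    have e2 : pL.2 * Qᵀ = B := by
      rw [hBQ, Matrix.mul_assoc, hQQT, Matrix.mul_one]
    show (pL.1 * Qᵀ, pL.2 * Qᵀ) = (A, B)
    rw [e1, e2]
  have hΦtend : Filter.Tendsto Φ (nhds pL) (nhds (A, B)) := by
    rw [← hΦpL]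
    exact hΦcont.continuousAt.tendsto
  have hminpL : ∀ᶠ p in nhds pL, f2 (A, B) ≤ f2 p := by
    filter_upwards [hΦtend.eventually hmin] with p hp2
    rwa [hΦval p] at hp2
  -- contradiction
  have hf2k : ∀ k, f2 (As k, Bs k) = fstar (Wseq k) := by
    intro k
    simp only [hf2, hfstar, hABk k, hfsA k, hfsB k]
    ring
  have hev2 := hψtend.eventually hminpL
  obtain ⟨j, hj⟩ := hev2.exists
  have hcontra : f2 ((fun k => (As k, Bs k)) (ψ j)) < f2 (A, B) := by
    show f2 (As (ψ j), Bs (ψ j)) < f2 (A, B)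
    rw [hf2k (ψ j), hfAB]
    exact hlt (ψ j)
  exact absurd hj (not_le.mpr hcontra)
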